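/- Let H be a Hopf algebra, A an H-module algebra, and F ∈ H⊗H a counital 2-cocycle with F⁻¹ = f'⊗f'' (summation understood). Then the map A_F # H^F → A # H sending a#h to (f' ▷ a)#(f''h) is an isomorphism of algebras. -/

import Mathlib

open TensorProduct LinearMap

noncomputable section

variable (k : Type) [Field k]
variable (H : Type) [Ring H] [HopfAlgebra k H]

/-- `F`, with inverse `Finv`, is a counital 2-cocycle on the Hopf algebra `H`:
`(F⊗1)·(Δ⊗id)(F) = (1⊗F)·(id⊗Δ)(F)` and `(ε⊗id)(F) = 1 = (id⊗ε)(F)`. -/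
def IsCocycle (F Finv : H ⊗[k] H) : Prop :=
  F * Finv = 1 ∧ Finv * F = 1 ∧
  (F ⊗ₜ[k] (1 : H)) * (TensorProduct.map Coalgebra.comul LinearMap.id F) =
    (TensorProduct.assoc k H H H).symm
      (((1 : H) ⊗ₜ[k] F) * (TensorProduct.map LinearMap.id Coalgebra.comul F)) ∧
  TensorProduct.map Coalgebra.counit LinearMap.id F = 1 ∧
  TensorProduct.map LinearMap.id Coalgebra.counit F = 1

/-- A (left) module-algebra structure of a Hopf algebra `H` on an algebra `A`:
`A` is an algebra object in the category of `H`-modules. -/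
structure ModuleAlgebra (A : Type) [Ring A] [Algebra k A] where
  act : H →ₗ[k] Module.End k A
  act_one : act 1 = 1
  act_mul : ∀ g h : H, act (g * h) = act g * act h
  act_algebra_unit : ∀ h : H, act h (1 : A) = (Coalgebra.counit h : k) • (1 : A)
  act_algebra_mul : ∀ (h : H) (a b : A),
    act h (a * b) = LinearMap.mul' k A
      ((TensorProduct.homTensorHomMap (RingHom.id k) A A A A
        (TensorProduct.map act act (Coalgebra.comul h))) (a ⊗ₜ[k] b))

variable {k H}

/-- The operator on `A ⊗ B` obtained by letting an element `x ∈ H ⊗ H` act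
legwise through the actions `actA`, `actB`. -/
def legAct {A B : Type} [AddCommGroup A] [Module k A] [AddCommGroup B] [Module k B]
    (actA : H →ₗ[k] Module.End k A) (actB : H →ₗ[k] Module.End k B) (x : H ⊗[k] H) :
    A ⊗[k] B →ₗ[k] A ⊗[k] B :=
  TensorProduct.homTensorHomMap (RingHom.id k) A B A B (TensorProduct.map actA actB x)

/-- The twisted product `m_F = m ∘ (F⁻¹ ▷ −)` on `A`. -/
def twistedMul {A : Type} [Ring A] [Algebra k A] (ma : ModuleAlgebra k H A)
    (Finv : H ⊗[k] H) : A ⊗[k] A →ₗ[k] A :=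
  LinearMap.mul' k A ∘ₗ legAct ma.act ma.act Finv

/-- The twisted coproduct `Δ_F(h) = F·Δ(h)·F⁻¹`. -/
def twistedComul (F Finv : H ⊗[k] H) : H →ₗ[k] H ⊗[k] H :=
  LinearMap.mulLeft k F ∘ₗ LinearMap.mulRight k Finv ∘ₗ Coalgebra.comul


/-- A representation of a `k`-algebra `A` on a `k`-vector space `V`. -/
structure AlgRep (A : Type) [Ring A] [Algebra k A] (V : Type) [AddCommGroup V] [Module k V] where
  ρ : A →ₗ[k] Module.End k V
  ρ_one : ρ 1 = 1
  ρ_mul : ∀ a b : A, ρ (a * b) = ρ a * ρ b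

/-- `V` is an `(H,A)`-module: the `A`-action is a morphism of `H`-modules, i.e.
`h ▷ (a ▷_A v) = (h₍₁₎ ▷ a) ▷_A (h₍₂₎ ▷ v)`. -/
def IsHAModule {A V : Type} [Ring A] [Algebra k A] [AddCommGroup V] [Module k V]
    (ma : ModuleAlgebra k H A) (ρA : AlgRep (k := k) A V) (ρH : AlgRep (k := k) H V) : Prop :=
  ∀ (h : H) (a : A) (v : V),
    ρH.ρ h (ρA.ρ a v) =
      TensorProduct.lift ρA.ρ (legAct ma.act ρH.ρ (Coalgebra.comul h) (a ⊗ₜ[k] v))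

/-- The Giaquinto–Zhang twisted action `▷_F = ▷_A ∘ (F⁻¹ ▷ −)` of `A_F` on `V`. -/
def twistedAct {A V : Type} [Ring A] [Algebra k A] [AddCommGroup V] [Module k V]
    (ma : ModuleAlgebra k H A) (ρA : AlgRep (k := k) A V) (ρH : AlgRep (k := k) H V)
    (Finv : H ⊗[k] H) : A →ₗ[k] Module.End k V :=
  TensorProduct.curry (TensorProduct.lift ρA.ρ ∘ₗ legAct ma.act ρH.ρ Finv)

/-- Generic smash-product multiplication on `A ⊗ H`, for a multiplication `μA` on `A`,
comultiplication `δ` and multiplication `μH` on `H`, and action `actUn : H ⊗ A → A`: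
`(a # h)(b # g) = a·(h₍₁₎ ▷ b) # h₍₂₎·g`. -/
def smashMulMap {A : Type} [AddCommGroup A] [Module k A]
    (μA : A ⊗[k] A →ₗ[k] A) (δ : H →ₗ[k] H ⊗[k] H) (μH : H ⊗[k] H →ₗ[k] H)
    (actUn : H ⊗[k] A →ₗ[k] A) :
    (A ⊗[k] H) ⊗[k] (A ⊗[k] H) →ₗ[k] A ⊗[k] H :=
  TensorProduct.map μA LinearMap.id
    ∘ₗ (TensorProduct.assoc k A A H).symm.toLinearMap
    ∘ₗ (TensorProduct.map LinearMap.id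
          ((TensorProduct.map actUn μH)
            ∘ₗ (TensorProduct.tensorTensorTensorComm k H H A H).toLinearMap))
    ∘ₗ (TensorProduct.assoc k A (H ⊗[k] H) (A ⊗[k] H)).toLinearMap
    ∘ₗ TensorProduct.map (TensorProduct.map LinearMap.id δ) LinearMap.id

/-! ### Auxiliary machinery for the proof -/
set_option synthInstance.maxHeartbeats 400000
set_option maxHeartbeats 1000000

section KMaux

variable {A : Type} [Ring A] [Algebra k A]

lemma legAct_tmul {B C : Type} [AddCommGroup B] [Module k B] [AddCommGroup C] [Module k C]
    (actA : H →ₗ[k] Module.End k B) (actB : H →ₗ[k] Module.End k C) (g h : H) :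
    legAct actA actB (g ⊗ₜ[k] h) = TensorProduct.map (actA g) (actB h) := by
  simp [legAct]

lemma legAct_add {B C : Type} [AddCommGroup B] [Module k B] [AddCommGroup C] [Module k C]
    (actA : H →ₗ[k] Module.End k B) (actB : H →ₗ[k] Module.End k C) (x y : H ⊗[k] H) :
    legAct actA actB (x + y) = legAct actA actB x + legAct actA actB y := by
  simp [legAct, map_add]

lemma legAct_zero {B C : Type} [AddCommGroup B] [Module k B] [AddCommGroup C] [Module k C]
    (actA : H →ₗ[k] Module.End k B) (actB : H →ₗ[k] Module.End k C) :
    legAct actA actB (0 : H ⊗[k] H) = 0 := by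
  simp [legAct]

lemma legAct_one {B C : Type} [AddCommGroup B] [Module k B] [AddCommGroup C] [Module k C]
    (actA : H →ₗ[k] Module.End k B) (actB : H →ₗ[k] Module.End k C)
    (hA : actA 1 = 1) (hB : actB 1 = 1) :
    legAct actA actB (1 : H ⊗[k] H) = LinearMap.id := by
  rw [Algebra.TensorProduct.one_def, legAct_tmul, hA, hB, Module.End.one_eq_id]
  exact TensorProduct.map_id

lemma legAct_mul {B C : Type} [AddCommGroup B] [Module k B] [AddCommGroup C] [Module k C]
    (actA : H →ₗ[k] Module.End k B) (actB : H →ₗ[k] Module.End k C)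
    (hA : ∀ g h : H, actA (g * h) = actA g * actA h)
    (hB : ∀ g h : H, actB (g * h) = actB g * actB h)
    (x y : H ⊗[k] H) :
    legAct actA actB (x * y) = legAct actA actB x ∘ₗ legAct actA actB y := by
  induction x using TensorProduct.induction_on with
  | zero => simp [legAct_zero]
  | add x1 x2 ih1 ih2 => simp [add_mul, legAct_add, ih1, ih2, LinearMap.add_comp]
  | tmul g h =>
    induction y using TensorProduct.induction_on with
    | zero => simp [legAct_zero]
    | add y1 y2 ih1 ih2 => simp [mul_add, legAct_add, ih1, ih2, LinearMap.comp_add]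
    | tmul g' h' =>
      rw [Algebra.TensorProduct.tmul_mul_tmul, legAct_tmul, legAct_tmul, legAct_tmul,
        hA, hB, Module.End.mul_eq_comp, Module.End.mul_eq_comp]
      exact TensorProduct.map_comp _ _ _ _

/-- `TensorProduct.map` of multiplicative maps is multiplicative. -/
lemma tmap_mul {B C D E : Type} [Ring B] [Algebra k B] [Ring C] [Algebra k C]
    [Ring D] [Algebra k D] [Ring E] [Algebra k E]
    (φ : B →ₗ[k] D) (ψ : C →ₗ[k] E)
    (hφ : ∀ x y, φ (x * y) = φ x * φ y) (hψ : ∀ x y, ψ (x * y) = ψ x * ψ y)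
    (x y : B ⊗[k] C) :
    TensorProduct.map φ ψ (x * y) = TensorProduct.map φ ψ x * TensorProduct.map φ ψ y := by
  induction x using TensorProduct.induction_on with
  | zero => simp
  | add x1 x2 ih1 ih2 => simp [add_mul, ih1, ih2]
  | tmul b c =>
    induction y using TensorProduct.induction_on with
    | zero => simp
    | add y1 y2 ih1 ih2 => simp [mul_add, ih1, ih2]
    | tmul b' c' => simp [Algebra.TensorProduct.tmul_mul_tmul, hφ, hψ]

/-- `(Δ ⊗ id)` as a linear map `H ⊗ H → (H ⊗ H) ⊗ H`. -/
private abbrev Dl : H ⊗[k] H →ₗ[k] (H ⊗[k] H) ⊗[k] H :=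
  TensorProduct.map Coalgebra.comul LinearMap.id

/-- `(id ⊗ Δ)` as a linear map `H ⊗ H → H ⊗ (H ⊗ H)`. -/
private abbrev Dr : H ⊗[k] H →ₗ[k] H ⊗[k] (H ⊗[k] H) :=
  TensorProduct.map LinearMap.id Coalgebra.comul

lemma Dl_mul (x y : H ⊗[k] H) : Dl (k := k) (H := H) (x * y) = Dl x * Dl y :=
  tmap_mul _ _ (fun a b => Bialgebra.comul_mul a b) (fun _ _ => rfl) x y

lemma Dr_mul (x y : H ⊗[k] H) : Dr (k := k) (H := H) (x * y) = Dr x * Dr y :=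
  tmap_mul _ _ (fun _ _ => rfl) (fun a b => Bialgebra.comul_mul a b) x y

lemma Dl_one : Dl (k := k) (H := H) 1 = 1 := by
  rw [Algebra.TensorProduct.one_def]
  simp [Algebra.TensorProduct.one_def]

lemma Dr_one : Dr (k := k) (H := H) 1 = 1 := by
  rw [Algebra.TensorProduct.one_def]
  simp [Algebra.TensorProduct.one_def]

/-- The key inverted-cocycle identity:
`(Δ⊗id)(F⁻¹)·(F⁻¹⊗1) = (id⊗Δ)(F⁻¹)·(1⊗F⁻¹)` in `(H⊗H)⊗H`. -/
lemma key_inv (F Finv : H ⊗[k] H) (hF : IsCocycle k H F Finv) :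
    Dl Finv * (Finv ⊗ₜ[k] (1 : H)) =
      (Algebra.TensorProduct.assoc k k k H H H).symm (Dr Finv * ((1 : H) ⊗ₜ[k] Finv)) := by
  obtain ⟨h1, h2, h3, -, -⟩ := hF
  set σ := (Algebra.TensorProduct.assoc k k k H H H).symm with hσ
  have h3' : (F ⊗ₜ[k] (1 : H)) * Dl F = σ (((1 : H) ⊗ₜ[k] F) * Dr F) := h3
  set Z : (H ⊗[k] H) ⊗[k] H := Dl Finv * (Finv ⊗ₜ[k] (1 : H)) with hZ
  set W : (H ⊗[k] H) ⊗[k] H := (F ⊗ₜ[k] (1 : H)) * Dl F with hW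
  set Z' : (H ⊗[k] H) ⊗[k] H := σ (Dr Finv * ((1 : H) ⊗ₜ[k] Finv)) with hZ'
  have hZW : Z * W = 1 := by
    rw [hZ, hW]
    calc Dl Finv * (Finv ⊗ₜ[k] (1:H)) * ((F ⊗ₜ[k] (1:H)) * Dl F)
        = Dl Finv * ((Finv ⊗ₜ[k] (1:H)) * (F ⊗ₜ[k] (1:H))) * Dl F := by
            simp only [mul_assoc]
      _ = Dl Finv * Dl F := by
            rw [Algebra.TensorProduct.tmul_mul_tmul, h2, one_mul, ← Algebra.TensorProduct.one_def, mul_one]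
      _ = 1 := by rw [← Dl_mul, h2, Dl_one]
  have hWZ' : W * Z' = 1 := by
    rw [h3', hZ']
    rw [← map_mul]
    calc σ (((1:H) ⊗ₜ[k] F) * Dr F * (Dr Finv * ((1:H) ⊗ₜ[k] Finv)))
        = σ (((1:H) ⊗ₜ[k] F) * (Dr F * Dr Finv) * ((1:H) ⊗ₜ[k] Finv)) := by
            rw [mul_assoc, mul_assoc, mul_assoc]
      _ = σ (((1:H) ⊗ₜ[k] F) * ((1:H) ⊗ₜ[k] Finv)) := by
            rw [← Dr_mul, h1, Dr_one, mul_one]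
      _ = 1 := by
            rw [Algebra.TensorProduct.tmul_mul_tmul, one_mul, h1,
              ← Algebra.TensorProduct.one_def, map_one]
  have hZ'W : Z' * W = 1 := by
    rw [h3', hZ']
    rw [← map_mul]
    calc σ (Dr Finv * ((1:H) ⊗ₜ[k] Finv) * (((1:H) ⊗ₜ[k] F) * Dr F))
        = σ (Dr Finv * (((1:H) ⊗ₜ[k] Finv) * ((1:H) ⊗ₜ[k] F)) * Dr F) := by
            rw [mul_assoc, mul_assoc, mul_assoc]
      _ = σ (Dr Finv * Dr F) := by
            rw [Algebra.TensorProduct.tmul_mul_tmul, one_mul, h2,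
              ← Algebra.TensorProduct.one_def, mul_one]
      _ = 1 := by rw [← Dr_mul, h2, Dr_one, map_one]
  calc Z = Z * (W * Z') := by rw [hWZ', mul_one]
    _ = (Z * W) * Z' := (mul_assoc Z W Z').symm
    _ = Z' := by rw [hZW, one_mul]

variable (ma : ModuleAlgebra k H A)

/-- The map `(u ⊗ v) ⊗ w ↦ ((u ▷ a)·(v ▷ b)) ⊗ (w·g)`. -/
def Xi (a b : A) (g : H) : (H ⊗[k] H) ⊗[k] H →ₗ[k] A ⊗[k] H :=
  TensorProduct.map
    (LinearMap.mul' k A ∘ₗ TensorProduct.map (ma.act.flip a) (ma.act.flip b))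
    (LinearMap.mulRight k g)

@[simp] lemma Xi_tmul (a b : A) (g : H) (u v w : H) :
    Xi ma a b g ((u ⊗ₜ[k] v) ⊗ₜ[k] w) = (ma.act u a * ma.act v b) ⊗ₜ[k] (w * g) := by
  simp [Xi]

/-- `smashMulMap` on a pure tensor, as a function of `δ h`. -/
def smashAux (μA : A ⊗[k] A →ₗ[k] A) (actUn : H ⊗[k] A →ₗ[k] A) (a b : A) (g : H) :
    H ⊗[k] H →ₗ[k] A ⊗[k] H :=
  TensorProduct.map
    (μA ∘ₗ TensorProduct.mk k A A a ∘ₗ actUn ∘ₗ (TensorProduct.mk k H A).flip b)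
    (LinearMap.mulRight k g)

@[simp] lemma smashAux_tmul (μA : A ⊗[k] A →ₗ[k] A) (actUn : H ⊗[k] A →ₗ[k] A)
    (a b : A) (g : H) (h1 h2 : H) :
    smashAux μA actUn a b g (h1 ⊗ₜ[k] h2) =
      μA (a ⊗ₜ[k] actUn (h1 ⊗ₜ[k] b)) ⊗ₜ[k] (h2 * g) := by
  simp [smashAux]

lemma smashMulMap_tmul (μA : A ⊗[k] A →ₗ[k] A) (δ : H →ₗ[k] H ⊗[k] H)
    (actUn : H ⊗[k] A →ₗ[k] A) (a b : A) (h g : H) :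
    smashMulMap μA δ (LinearMap.mul' k H) actUn ((a ⊗ₜ[k] h) ⊗ₜ[k] (b ⊗ₜ[k] g)) =
      smashAux μA actUn a b g (δ h) := by
  rw [smashMulMap]
  simp only [LinearMap.coe_comp, Function.comp_apply, LinearEquiv.coe_coe,
    TensorProduct.map_tmul, LinearMap.id_coe, id_eq, TensorProduct.assoc_tmul]
  generalize δ h = t
  induction t using TensorProduct.induction_on with
  | zero => simp only [TensorProduct.zero_tmul, TensorProduct.tmul_zero, map_zero,
      smashAux, LinearEquiv.map_zero]
  | add t1 t2 ih1 ih2 => simp only [TensorProduct.tmul_add, TensorProduct.add_tmul, map_add,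
      LinearEquiv.map_add, ih1, ih2]
  | tmul h1 h2 =>
    simp [TensorProduct.tensorTensorTensorComm_tmul, TensorProduct.assoc_symm_tmul]

lemma act_mul_eq_legAct (h : H) (c d : A) :
    ma.act h (c * d) =
      LinearMap.mul' k A (legAct ma.act ma.act (Coalgebra.comul h) (c ⊗ₜ[k] d)) :=
  ma.act_algebra_mul h c d

lemma evalL_core (a b : A) (x y : H) (r : H ⊗[k] H) :
    LinearMap.mul' k A (legAct ma.act ma.act r ((ma.act x a) ⊗ₜ[k] (ma.act y b))) =
      (LinearMap.mul' k A ∘ₗ TensorProduct.map (ma.act.flip a) (ma.act.flip b))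
        (r * (x ⊗ₜ[k] y)) := by
  induction r using TensorProduct.induction_on with
  | zero => simp [legAct_zero]
  | add r1 r2 ih1 ih2 => simp only [legAct_add, LinearMap.add_apply, add_mul, map_add, ih1, ih2]
  | tmul r1 r2 =>
    rw [legAct_tmul, Algebra.TensorProduct.tmul_mul_tmul]
    simp [ma.act_mul, Module.End.mul_apply]

lemma smashAux_mu_add (f g : A ⊗[k] A →ₗ[k] A ⊗[k] A) (actUn : H ⊗[k] A →ₗ[k] A)
    (a b : A) (gg : H) (s : H ⊗[k] H) :
    smashAux (LinearMap.mul' k A ∘ₗ (f + g)) actUn a b gg s =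
      smashAux (LinearMap.mul' k A ∘ₗ f) actUn a b gg s +
        smashAux (LinearMap.mul' k A ∘ₗ g) actUn a b gg s := by
  simp only [smashAux, LinearMap.comp_add, LinearMap.add_comp,
    TensorProduct.map_add_left, LinearMap.add_apply]

lemma smashAux_mu_zero (actUn : H ⊗[k] A →ₗ[k] A) (a b : A) (gg : H) (s : H ⊗[k] H) :
    smashAux (LinearMap.mul' k A ∘ₗ (0 : A ⊗[k] A →ₗ[k] A ⊗[k] A)) actUn a b gg s = 0 := by
  simp only [smashAux, LinearMap.comp_zero, LinearMap.zero_comp,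
    TensorProduct.map_zero_left, LinearMap.zero_apply]

lemma evalL (a b : A) (g : H) (u v s : H ⊗[k] H) :
    legAct ma.act (LinearMap.mul k H) u
      (smashAux (LinearMap.mul' k A ∘ₗ legAct ma.act ma.act v)
        (TensorProduct.lift ma.act) a b g s) =
      Xi ma a b g (Dl u * (v ⊗ₜ[k] (1 : H)) *
        (Algebra.TensorProduct.assoc k k k H H H).symm ((1 : H) ⊗ₜ[k] s)) := by
  induction u using TensorProduct.induction_on with
  | zero => simp only [legAct_zero, LinearMap.zero_apply, map_zero, zero_mul, add_mul]
  | add u1 u2 ih1 ih2 => simp only [legAct_add, LinearMap.add_apply, map_add, add_mul,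
      ih1, ih2]
  | tmul u1 u2 =>
    induction s using TensorProduct.induction_on with
    | zero => simp only [map_zero, TensorProduct.tmul_zero, LinearEquiv.map_zero, mul_zero]
    | add s1 s2 ih1 ih2 => simp only [TensorProduct.tmul_add, map_add, LinearEquiv.map_add,
        mul_add, ih1, ih2]
    | tmul s1 s2 =>
      induction v using TensorProduct.induction_on with
      | zero =>
          rw [legAct_zero, smashAux_mu_zero]
          simp only [TensorProduct.zero_tmul, zero_mul, mul_zero, map_zero]
      | add v1 v2 ih1 ih2 =>
          rw [legAct_add, smashAux_mu_add, map_add, ih1, ih2,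
            TensorProduct.add_tmul, mul_add, add_mul, map_add]
      | tmul v1 v2 =>
        simp only [smashAux_tmul, LinearMap.comp_apply, legAct_tmul,
          TensorProduct.map_tmul, TensorProduct.lift.tmul, LinearMap.mul'_apply]
        have hv : ma.act v2 (ma.act s1 b) = ma.act (v2 * s1) b := by
          rw [ma.act_mul, Module.End.mul_apply]
        rw [hv, act_mul_eq_legAct, evalL_core]
        simp only [TensorProduct.map_tmul, LinearMap.id_coe, id_eq,
          Algebra.TensorProduct.assoc_symm_tmul, Algebra.TensorProduct.tmul_mul_tmul,
          Xi, LinearMap.mulRight_apply, LinearMap.mul_apply', mul_one, one_mul, mul_assoc]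

lemma evalR_core (a b : A) (g : H) (u' v' v'' : H) (m : H ⊗[k] H) :
    smashAux (LinearMap.mul' k A) (TensorProduct.lift ma.act)
        (ma.act u' a) (ma.act v' b) (v'' * g) m =
      Xi ma a b g ((Algebra.TensorProduct.assoc k k k H H H).symm
        (u' ⊗ₜ[k] (m * (v' ⊗ₜ[k] v'')))) := by
  induction m using TensorProduct.induction_on with
  | zero => simp
  | add m1 m2 ih1 ih2 => simp only [map_add, add_mul, TensorProduct.tmul_add, ih1, ih2]
  | tmul m1 m2 =>
    rw [smashAux_tmul, Algebra.TensorProduct.tmul_mul_tmul,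
      Algebra.TensorProduct.assoc_symm_tmul, Xi_tmul]
    simp only [TensorProduct.lift.tmul, LinearMap.mul'_apply]
    have hm : ma.act m1 (ma.act v' b) = ma.act (m1 * v') b := by
      rw [ma.act_mul, Module.End.mul_apply]
    rw [hm, mul_assoc]

lemma evalR (a b : A) (h g : H) (u v : H ⊗[k] H) :
    smashMulMap (LinearMap.mul' k A) Coalgebra.comul (LinearMap.mul' k H)
        (TensorProduct.lift ma.act)
        ((legAct ma.act (LinearMap.mul k H) u (a ⊗ₜ[k] h)) ⊗ₜ[k]
          (legAct ma.act (LinearMap.mul k H) v (b ⊗ₜ[k] g))) =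
      Xi ma a b g ((Algebra.TensorProduct.assoc k k k H H H).symm
        (Dr u * ((1 : H) ⊗ₜ[k] (Coalgebra.comul h * v)))) := by
  induction u using TensorProduct.induction_on with
  | zero => simp only [legAct_zero, LinearMap.zero_apply, TensorProduct.zero_tmul,
      map_zero, zero_mul, LinearEquiv.map_zero]
  | add u1 u2 ih1 ih2 =>
      simp only [legAct_add, LinearMap.add_apply, TensorProduct.add_tmul, map_add, add_mul,
        LinearEquiv.map_add, ih1, ih2]
  | tmul u1 u2 =>
    induction v using TensorProduct.induction_on with
    | zero => simp only [legAct_zero, LinearMap.zero_apply, TensorProduct.tmul_zero,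
        map_zero, mul_zero, LinearEquiv.map_zero]
    | add v1 v2 ih1 ih2 =>
        simp only [legAct_add, LinearMap.add_apply, TensorProduct.tmul_add, map_add, mul_add,
          LinearEquiv.map_add, ih1, ih2]
    | tmul v1 v2 =>
      rw [legAct_tmul, legAct_tmul]
      simp only [TensorProduct.map_tmul, LinearMap.mul_apply', LinearMap.id_coe, id_eq]
      rw [smashMulMap_tmul]
      have hc : Coalgebra.comul (R := k) (u2 * h) = Coalgebra.comul u2 * Coalgebra.comul h :=
        Bialgebra.comul_mul u2 h
      rw [hc]
      have h1 : (u1 ⊗ₜ[k] (Coalgebra.comul u2)) *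
            ((1:H) ⊗ₜ[k] (Coalgebra.comul h * (v1 ⊗ₜ[k] v2))) =
          u1 ⊗ₜ[k] (Coalgebra.comul u2 * Coalgebra.comul h * (v1 ⊗ₜ[k] v2)) := by
        rw [Algebra.TensorProduct.tmul_mul_tmul, mul_one, mul_assoc]
      rw [h1]
      exact evalR_core ma a b g u1 v1 v2 (Coalgebra.comul u2 * Coalgebra.comul h)


lemma unit_eval (x : H ⊗[k] H) :
    legAct ma.act (LinearMap.mul k H) x ((1:A) ⊗ₜ[k] (1:H)) =
      TensorProduct.map (Algebra.linearMap k A) LinearMap.id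
        (TensorProduct.map Coalgebra.counit LinearMap.id x) := by
  induction x using TensorProduct.induction_on with
  | zero => simp [legAct_zero]
  | add x1 x2 ih1 ih2 => simp only [legAct_add, LinearMap.add_apply, map_add, ih1, ih2]
  | tmul g h =>
    rw [legAct_tmul]
    simp [ma.act_algebra_unit, mul_one, LinearMap.mul_apply',
      Algebra.algebraMap_eq_smul_one]


end KMaux


/-- Kulish–Mudrov isomorphism of smash products: the map
`a # h ↦ (f' ▷ a) # f''·h` (with `F⁻¹ = f' ⊗ f''`) is an algebra isomorphism
`A_F # H^F ≅ A # H`. -/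
theorem twisted_smash_iso {A : Type} [Ring A] [Algebra k A]
    (ma : ModuleAlgebra k H A) (F Finv : H ⊗[k] H) (hF : IsCocycle k H F Finv) :
    Function.Bijective (legAct ma.act (LinearMap.mul k H) Finv) ∧
    (∀ x y : A ⊗[k] H,
      legAct ma.act (LinearMap.mul k H) Finv
          (smashMulMap (twistedMul ma Finv) (twistedComul F Finv) (LinearMap.mul' k H)
            (TensorProduct.lift ma.act) (x ⊗ₜ[k] y)) =
        smashMulMap (LinearMap.mul' k A) Coalgebra.comul (LinearMap.mul' k H)
          (TensorProduct.lift ma.act)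
          (legAct ma.act (LinearMap.mul k H) Finv x ⊗ₜ[k]
            legAct ma.act (LinearMap.mul k H) Finv y)) ∧
    legAct ma.act (LinearMap.mul k H) Finv ((1 : A) ⊗ₜ[k] (1 : H)) =
      (1 : A) ⊗ₜ[k] (1 : H)   := by
  have hc1 : F * Finv = 1 := hF.1
  have hc2 : Finv * F = 1 := hF.2.1
  have hcl : TensorProduct.map Coalgebra.counit LinearMap.id F = 1 := hF.2.2.2.1
  have hmulH : ∀ g h : H, (LinearMap.mul k H) (g * h) =
      LinearMap.mul k H g * LinearMap.mul k H h := by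
    intro g h
    ext x
    simp [LinearMap.mul_apply', Module.End.mul_apply, mul_assoc]
  have honeH : (LinearMap.mul k H) (1 : H) = 1 := by
    ext x
    simp [LinearMap.mul_apply']
  have hAB : legAct ma.act (LinearMap.mul k H) F ∘ₗ legAct ma.act (LinearMap.mul k H) Finv =
      LinearMap.id := by
    rw [← legAct_mul ma.act (LinearMap.mul k H) ma.act_mul hmulH F Finv, hc1,
      legAct_one ma.act (LinearMap.mul k H) ma.act_one honeH]
  have hBA : legAct ma.act (LinearMap.mul k H) Finv ∘ₗ legAct ma.act (LinearMap.mul k H) F =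
      LinearMap.id := by
    rw [← legAct_mul ma.act (LinearMap.mul k H) ma.act_mul hmulH Finv F, hc2,
      legAct_one ma.act (LinearMap.mul k H) ma.act_one honeH]
  have hl : ∀ x, legAct ma.act (LinearMap.mul k H) F (legAct ma.act (LinearMap.mul k H) Finv x)
      = x := by
    intro x
    have := LinearMap.congr_fun hAB x
    simpa using this
  have hr : ∀ x, legAct ma.act (LinearMap.mul k H) Finv (legAct ma.act (LinearMap.mul k H) F x)
      = x := by
    intro x
    have := LinearMap.congr_fun hBA x
    simpa using this
  refine ⟨⟨Function.LeftInverse.injective hl, Function.RightInverse.surjective hr⟩, ?_, ?_⟩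
  · intro x y
    induction x using TensorProduct.induction_on with
    | zero => simp
    | add x1 x2 ih1 ih2 => simp only [TensorProduct.add_tmul, map_add, ih1, ih2]
    | tmul a h =>
      induction y using TensorProduct.induction_on with
      | zero => simp
      | add y1 y2 ih1 ih2 => simp only [TensorProduct.tmul_add, map_add, ih1, ih2]
      | tmul b g =>
        have hTM : twistedMul ma Finv = LinearMap.mul' k A ∘ₗ legAct ma.act ma.act Finv := rfl
        rw [hTM, smashMulMap_tmul]
        have hTC : twistedComul F Finv h = F * (Coalgebra.comul h * Finv) := by
          simp [twistedComul]
        rw [hTC, evalL, evalR]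
        congr 1
        rw [key_inv F Finv hF, ← map_mul]
        congr 1
        rw [mul_assoc, Algebra.TensorProduct.tmul_mul_tmul, one_mul, ← mul_assoc Finv F _,
          hc2, one_mul]
  · have hcounit : TensorProduct.map Coalgebra.counit LinearMap.id Finv = 1 := by
      have hm := tmap_mul (Coalgebra.counit (R := k) (A := H)) (LinearMap.id (R := k) (M := H))
        (fun x y => Bialgebra.counit_mul x y) (fun _ _ => rfl) Finv F
      rw [hc2, hcl, mul_one] at hm
      rw [← hm, Algebra.TensorProduct.one_def, TensorProduct.map_tmul]
      simp [Algebra.TensorProduct.one_def]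
    rw [unit_eval, hcounit, Algebra.TensorProduct.one_def, TensorProduct.map_tmul]
    simp


end
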